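/- Interpretation of atomic formulas (correctness of the reduction): let S = ⟨D; R_1,…,R_q⟩ be a finite ρ-structure, with m the maximal arity of its relations, such that degree_S(x) ≤ d for every x ∈ D. Then there exist a bijective σ-structure S′ = ⟨D′; D̂, T_1,…,T_q, g, f_1,…,f_m⟩ (all function symbols interpreted as permutations of D′) and an injection ι : D → D′ whose image is the interpretation of the monadic predicate D̂, such that for every relation symbol R_i of arity k and all (a_1,…,a_k) ∈ D^k: S ⊨ R_i(a_1,…,a_k) if and only if S′ ⊨ θ_i(ι(a_1),…,ι(a_k)), where θ_i(x_1,…,x_k) is the σ-formula ∃t (T_i(t) ∧ ⋀_{1≤j≤k} ⋁_{1≤h≤d} f_j(t) = g^h(x_j)). -/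

import Mathlib

/-!
Degrees of relational structures. A relational signature ρ = {R_1,…,R_q} has
`q` relation symbols, `R i` of arity `a i`; a ρ-structure with domain `D`
interprets each `R i` as a finite set `R i : Finset (Fin (a i) → D)` of
`a i`-tuples.
-/

namespace PaperDeg

variable {D : Type*} [DecidableEq D] {q : ℕ} {a : Fin q → ℕ}

/-- The (tuple) degree of `x` in the structure: the total number of pairs
`(i, t̄)` with `t̄ ∈ R i` and `x` occurring as a component of `t̄`. -/
def deg (R : ∀ i, Finset (Fin (a i) → D)) (x : D) : ℕ :=
  ∑ i : Fin q, ((R i).filter fun t => ∃ j, t j = x).card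

/-- The adjacency degree of `x` in the structure: the number of elements
`y ≠ x` such that `x` and `y` both occur as components of some tuple of some
relation `R i`. -/
noncomputable def deg1 (R : ∀ i, Finset (Fin (a i) → D)) (x : D) : ℕ :=
  Set.ncard {y : D | y ≠ x ∧ ∃ i : Fin q, ∃ t ∈ R i, (∃ j, t j = x) ∧ ∃ j, t j = y}

end PaperDeg

universe u


lemma exists_perm_extend {α β : Type*} [Fintype α] [DecidableEq α]
    (e F : β → α) (he : Function.Injective e) (hF : Function.Injective F) :
    ∃ π : Equiv.Perm α, ∀ b, π (e b) = F b := by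
  classical
  have : Fintype β := Fintype.ofInjective e he
  have hcard : Fintype.card ((Set.range e)ᶜ : Set α) =
      Fintype.card ((Set.range F)ᶜ : Set α) := by
    have h1 := Set.card_range_of_injective he
    have h2 := Set.card_range_of_injective hF
    have c1 := Fintype.card_compl_set (Set.range e)
    have c2 := Fintype.card_compl_set (Set.range F)
    omega
  let ec : ((Set.range e)ᶜ : Set α) ≃ ((Set.range F)ᶜ : Set α) :=
    Fintype.equivOfCardEq hcard
  let π : Equiv.Perm α :=
    (Equiv.Set.sumCompl (Set.range e)).symm.trans
      ((Equiv.sumCongr ((Equiv.ofInjective e he).symm.trans (Equiv.ofInjective F hF)) ec).trans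
        (Equiv.Set.sumCompl (Set.range F)))
  refine ⟨π, fun b => ?_⟩
  have hmem : e b ∈ Set.range e := ⟨b, rfl⟩
  simp only [π, Equiv.trans_apply, Equiv.Set.sumCompl_symm_apply_of_mem hmem,
    Equiv.sumCongr_apply, Sum.map_inl]
  have : (Equiv.ofInjective e he).symm ⟨e b, hmem⟩ = b := by
    apply he; simp [Equiv.apply_ofInjective_symm]
  rw [this]
  simp [Equiv.ofInjective_apply, Equiv.Set.sumCompl_apply_inl]

open Fin.NatCast in
lemma finRotate_pow_zero (d : ℕ) (h : ℕ) :
    ((finRotate (d + 1)) ^ h) 0 = (h : Fin (d + 1)) := by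
  induction h with
  | zero => simp
  | succ n ih =>
    rw [pow_succ', Equiv.Perm.mul_apply, ih, finRotate_succ_apply]
    push_cast; ring

lemma prodCongr_refl_pow {α β : Type*} (r : Equiv.Perm β) (h : ℕ) (x : α) (y : β) :
    ((Equiv.prodCongr (Equiv.refl α) r) ^ h) (x, y) = (x, (r ^ h) y) := by
  induction h generalizing y with
  | zero => simp
  | succ n ih =>
    rw [pow_succ, Equiv.Perm.mul_apply, pow_succ, Equiv.Perm.mul_apply]
    exact ih (r y)

lemma equivFin_val_inj {γ : Type*} {s t : Finset γ} (hst : s = t) {y z : γ}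
    (hy : y ∈ s) (hz : z ∈ t)
    (h : (s.equivFin ⟨y, hy⟩ : Fin s.card).1 = (t.equivFin ⟨z, hz⟩ : Fin t.card).1) :
    y = z := by
  subst hst
  have := s.equivFin.injective (Fin.ext h)
  exact congrArg Subtype.val this

open PaperDeg in
theorem interpretation_atomic {D : Type u} [Fintype D] [DecidableEq D]
    {q : ℕ} {a : Fin q → ℕ} (m d : ℕ) (ha : ∀ i, a i ≤ m)
    (R : ∀ i, Finset (Fin (a i) → D)) (hdeg : ∀ x : D, deg R x ≤ d) :
    ∃ (D' : Type u) (Dhat : Set D') (T : Fin q → Set D') (g : Equiv.Perm D')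
      (f : Fin m → Equiv.Perm D') (ι : D ↪ D'),
      Set.range ι = Dhat ∧
      ∀ (i : Fin q) (t : Fin (a i) → D),
        t ∈ R i ↔ ∃ s ∈ T i, ∀ j : Fin (a i),
          ∃ h ∈ Finset.Icc 1 d, f (Fin.castLE (ha i) j) s = (g ^ h) (ι (t j)) := by
  classical
  let β : Type u := Σ i : Fin q, {t : Fin (a i) → D // t ∈ R i}
  let E : Type u := D ⊕ β
  let D' : Type u := E × Fin (d + 1)
  let ι : D ↪ D' := ⟨fun x => (Sum.inl x, 0), by
    intro x y hxy
    exact Sum.inl.inj (congrArg Prod.fst hxy)⟩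
  -- occurrence sets
  let Occ : ℕ → D → Finset (Σ i : Fin q, (Fin (a i) → D)) := fun j x =>
    Finset.univ.sigma fun i => (R i).filter fun t => ∃ hj : j < a i, t ⟨j, hj⟩ = x
  have cardOcc : ∀ j x, (Occ j x).card ≤ d := by
    intro j x
    refine le_trans ?_ (hdeg x)
    rw [Finset.card_sigma, deg]
    refine Finset.sum_le_sum fun i _ => Finset.card_le_card ?_
    intro t ht
    simp only [Finset.mem_filter] at ht ⊢
    obtain ⟨ht1, hj, ht2⟩ := ht
    exact ⟨ht1, ⟨⟨j, hj⟩, ht2⟩⟩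
  have hmemOcc : ∀ (j : ℕ) (b : β) (hj : j < a b.1),
      (⟨b.1, b.2.1⟩ : Σ i : Fin q, (Fin (a i) → D)) ∈ Occ j (b.2.1 ⟨j, hj⟩) :=
    fun j b hj => Finset.mem_sigma.mpr
      ⟨Finset.mem_univ _, Finset.mem_filter.mpr ⟨b.2.2, hj, rfl⟩⟩
  let idx : ∀ (j : ℕ) (b : β), j < a b.1 → ℕ := fun j b hj =>
    ((Occ j (b.2.1 ⟨j, hj⟩)).equivFin ⟨⟨b.1, b.2.1⟩, hmemOcc j b hj⟩ : Fin _).1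
  have idx_lt : ∀ (j : ℕ) (b : β) (hj : j < a b.1), idx j b hj < d :=
    fun j b hj => lt_of_lt_of_le (Fin.is_lt _) (cardOcc j _)
  -- target functions for f_j
  let F : Fin m → β → D' := fun j b =>
    if hj : (j : ℕ) < a b.1 then
      (Sum.inl (b.2.1 ⟨j, hj⟩), ⟨idx j b hj + 1, by have := idx_lt j b hj; omega⟩)
    else (Sum.inr b, 0)
  have hFinj : ∀ j, Function.Injective (F j) := by
    intro j b1 b2 hb
    by_cases h1 : (j : ℕ) < a b1.1 <;> by_cases h2 : (j : ℕ) < a b2.1 <;>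
      simp only [F, h1, h2, dif_pos, dif_neg, not_false_iff] at hb
    · have hx : b1.2.1 ⟨j, h1⟩ = b2.2.1 ⟨j, h2⟩ :=
        Sum.inl.inj (congrArg Prod.fst hb)
      have hk : idx (j : ℕ) b1 h1 = idx (j : ℕ) b2 h2 := by
        have := congrArg (fun p : D' => (p.2 : ℕ)) hb
        simpa using this
      have key : (⟨b1.1, b1.2.1⟩ : Σ i : Fin q, (Fin (a i) → D)) = ⟨b2.1, b2.2.1⟩ :=
        equivFin_val_inj (congrArg (Occ (j : ℕ)) hx) (hmemOcc _ b1 h1) (hmemOcc _ b2 h2) hk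
      obtain ⟨i1, t1, ht1⟩ := b1
      obtain ⟨i2, t2, ht2⟩ := b2
      simp only [Sigma.mk.inj_iff] at key
      obtain ⟨rfl, h⟩ := key
      simp only [heq_eq_eq] at h
      subst h
      rfl
    · exact absurd (congrArg Prod.fst hb) (by simp)
    · exact absurd (congrArg Prod.fst hb) (by simp)
    · have := congrArg Prod.fst hb
      simp only at this
      exact Sum.inr.inj this
  -- the base embedding for tuples
  have heinj : Function.Injective (fun b : β => ((Sum.inr b, 0) : D')) := by
    intro b1 b2 hb
    exact Sum.inr.inj (congrArg Prod.fst hb)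
  choose f hf using fun j : Fin m =>
    exists_perm_extend (fun b : β => ((Sum.inr b, 0) : D')) (F j) heinj (hFinj j)
  let g : Equiv.Perm D' := Equiv.prodCongr (Equiv.refl E) (finRotate (d + 1))
  open Fin.NatCast in
  have hg : ∀ (h : ℕ) (x : D), (g ^ h) (ι x) = (Sum.inl x, (h : Fin (d + 1))) := by
    intro h x
    show (g ^ h) (Sum.inl x, 0) = _
    rw [prodCongr_refl_pow, finRotate_pow_zero]
  let T : Fin q → Set D' := fun i => {s | ∃ b : β, b.1 = i ∧ s = (Sum.inr b, 0)}
  refine ⟨D', Set.range ι, T, g, f, ι, rfl, fun i t => ?_⟩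
  constructor
  · intro ht
    refine ⟨(Sum.inr ⟨i, t, ht⟩, 0), ⟨⟨i, t, ht⟩, rfl, rfl⟩, fun j => ?_⟩
    set b : β := ⟨i, t, ht⟩
    have hj : ((Fin.castLE (ha i) j : Fin m) : ℕ) < a b.1 := by
      exact j.isLt
    refine ⟨idx _ b hj + 1, ?_, ?_⟩
    · have := idx_lt _ b hj; simp only [Finset.mem_Icc]; omega
    · rw [hf, hg]
      show F _ b = _
      rw [show F (Fin.castLE (ha i) j) b =
        (Sum.inl (b.2.1 ⟨_, hj⟩), ⟨idx _ b hj + 1, by have := idx_lt _ b hj; omega⟩)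
        from dif_pos hj]
      have hjj : (⟨((Fin.castLE (ha i) j : Fin m) : ℕ), hj⟩ : Fin (a i)) = j := by
        apply Fin.ext; simp
      have hd1 : idx _ b hj + 1 < d + 1 := by have := idx_lt _ b hj; omega
      refine Prod.ext ?_ ?_
      · show Sum.inl (t ⟨_, hj⟩) = Sum.inl (t j)
        rw [hjj]
      · apply Fin.ext
        exact (Fin.val_cast_of_lt hd1).symm
  · rintro ⟨s, ⟨b, hb1, rfl⟩, hs⟩
    obtain ⟨i', t', ht'⟩ := b
    dsimp at hb1
    subst hb1
    have htt : t = t' := by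
      funext j
      obtain ⟨h, hmem, heq⟩ := hs j
      rw [hf, hg] at heq
      have hj : ((Fin.castLE (ha i') j : Fin m) : ℕ) < a i' := by simpa using j.isLt
      rw [show F (Fin.castLE (ha i') j) ⟨i', t', ht'⟩ =
        (Sum.inl (t' ⟨_, hj⟩), ⟨idx _ ⟨i', t', ht'⟩ hj + 1,
          by have := idx_lt _ (⟨i', t', ht'⟩ : β) hj; omega⟩) from dif_pos hj] at heq
      have := Sum.inl.inj (congrArg Prod.fst heq)
      have hjj : (⟨((Fin.castLE (ha i') j : Fin m) : ℕ), hj⟩ : Fin (a i')) = j := by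
        apply Fin.ext; simp
      rw [hjj] at this
      exact this.symm
    rw [htt]
    exact ht'
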